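/- Define a function I : (list of natural numbers) → ℚ recursively by: I([2]) = I([1,1]) = 1/24 (for n = 2), and for n ≥ 3, if the list contains an entry equal to 1, remove it and multiply by (n-1) (dilaton equation); if it contains an entry equal to 0, remove it and replace the value by the sum over the remaining entries of the value with that entry decreased by 1 (string equation). Then for any list (d_1, ..., d_n) of nonnegative integers with d_1 + ... + d_n = n and d_1 < d_2, we have I(d_1, d_2, d_3, ..., d_n) ≤ I(d_1+1, d_2-1, d_3, ..., d_n). -/

import Mathlib

private lemma split1 (g : List ℕ → ℚ) (a : ℕ) (M : List ℕ) :
    (∑ j : Fin ((a::M).length), if 1 ≤ (a::M).get j then g ((a::M).set ↑j ((a::M).get j - 1)) else 0)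
    = (if 1 ≤ a then g ((a-1)::M) else 0)
      + ∑ j : Fin M.length, (if 1 ≤ M.get j then g (a :: M.set ↑j (M.get j - 1)) else 0) := by
  have h := Fin.sum_univ_succ (n := M.length)
    (f := fun j : Fin (M.length+1) => if 1 ≤ (a::M).get j then g ((a::M).set ↑j ((a::M).get j - 1)) else 0)
  refine h.trans ?_
  simp [List.get_cons_succ, Fin.val_succ]
  congr

private lemma split2 (g : List ℕ → ℚ) (a b : ℕ) (M : List ℕ) :
    (∑ j : Fin ((a::b::M).length), if 1 ≤ (a::b::M).get j then g ((a::b::M).set ↑j ((a::b::M).get j - 1)) else 0)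
    = (if 1 ≤ a then g ((a-1)::b::M) else 0)
      + ((if 1 ≤ b then g (a::(b-1)::M) else 0)
      + ∑ j : Fin M.length, (if 1 ≤ M.get j then g (a :: b :: M.set ↑j (M.get j - 1)) else 0)) := by
  rw [split1 g a (b::M)]
  congr 1
  exact split1 (fun l => g (a :: l)) b M

private lemma sum_set_aux : ∀ (M : List ℕ) (j : Fin M.length), 1 ≤ M.get j →
    (M.set ↑j (M.get j - 1)).sum + 1 = M.sum := by
  intro M
  induction M with
  | nil => intro j; exact absurd j.isLt (by simp)
  | cons a t ih =>
    intro j hj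
    induction j using Fin.cases with
    | zero => simp at hj ⊢; omega
    | succ i =>
      have h2 := ih i (by simpa using hj)
      simp at hj h2 ⊢
      omega

private lemma two_mul_len_le_sum : ∀ (L : List ℕ), (∀ x ∈ L, 2 ≤ x) → 2 * L.length ≤ L.sum := by
  intro L
  induction L with
  | nil => simp
  | cons a t ih =>
    intro h
    have h1 := h a (by simp)
    have h2 := ih (fun x hx => h x (by simp [hx]))
    simp [List.sum_cons]
    omega

theorem stmt_1 (I : List ℕ → ℚ)
    (hperm : ∀ l l' : List ℕ, l.Perm l' → I l = I l')
    (hbase1 : I [0, 2] = 1 / 24)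
    (hbase2 : I [1, 1] = 1 / 24)
    (hdilaton : ∀ l : List ℕ, 2 ≤ l.length → I (1 :: l) = (l.length : ℚ) * I l)
    (hstring : ∀ l : List ℕ, 2 ≤ l.length →
      I (0 :: l) = ∑ j : Fin l.length,
        if 1 ≤ l.get j then I (l.set j (l.get j - 1)) else 0) :
    ∀ (d1 d2 : ℕ) (L : List ℕ),
      d1 + d2 + L.sum = L.length + 2 → d1 < d2 →
      I (d1 :: d2 :: L) ≤ I ((d1 + 1) :: (d2 - 1) :: L) := by
  -- nonnegativity on on-shell lists
  have nonneg : ∀ (n : ℕ) (l : List ℕ), l.length = n → l.sum = n → 2 ≤ n → 0 ≤ I l := by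
    intro n
    induction n using Nat.strong_induction_on with
    | _ n ih =>
      intro l hlen hsum hn
      by_cases hn2 : n = 2
      · subst hn2
        obtain ⟨a, b, rfl⟩ := List.length_eq_two.mp hlen
        simp at hsum
        have ha : a ≤ 2 := by omega
        interval_cases a
        · have hb : b = 2 := by omega
          subst hb; rw [hbase1]; norm_num
        · have hb : b = 1 := by omega
          subst hb; rw [hbase2]; norm_num
        · have hb : b = 0 := by omega
          subst hb
          rw [hperm [2,0] [0,2] (List.Perm.swap 0 2 []), hbase1]; norm_num
      · have hn3 : 3 ≤ n := by omega
        by_cases h0 : 0 ∈ l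
        · have hp : l.Perm (0 :: l.erase 0) := List.perm_cons_erase h0
          set l' := l.erase 0 with hl'
          have hlen' : l'.length = n - 1 := by
            rw [hl', List.length_erase_of_mem h0, hlen]
          have hsum' : l'.sum = n := by
            have := hp.sum_eq; simp at this; omega
          rw [hperm _ _ hp, hstring l' (by omega)]
          apply Finset.sum_nonneg
          intro j _
          by_cases hj : 1 ≤ l'.get j
          · rw [if_pos hj]
            have hss := sum_set_aux l' j hj
            exact ih (n-1) (by omega) _ (by simp [hlen']) (by omega) (by omega)
          · rw [if_neg hj]
        · by_cases h1 : 1 ∈ l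
          · have hp : l.Perm (1 :: l.erase 1) := List.perm_cons_erase h1
            set l' := l.erase 1 with hl'
            have hlen' : l'.length = n - 1 := by
              rw [hl', List.length_erase_of_mem h1, hlen]
            have hsum' : l'.sum = n - 1 := by
              have := hp.sum_eq; simp at this; omega
            rw [hperm _ _ hp, hdilaton l' (by omega)]
            apply mul_nonneg (by positivity)
            exact ih (n-1) (by omega) _ hlen' hsum' (by omega)
          · exfalso
            have h2 : ∀ x ∈ l, 2 ≤ x := by
              intro x hx
              match x with
              | 0 => exact absurd hx h0
              | 1 => exact absurd hx h1
              | (m+2) => omega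
            have := two_mul_len_le_sum l h2
            omega
  have main : ∀ (k : ℕ) (d1 d2 : ℕ) (L : List ℕ), L.length = k →
      d1 + d2 + L.sum = L.length + 2 → d1 < d2 →
      I (d1 :: d2 :: L) ≤ I ((d1 + 1) :: (d2 - 1) :: L) := by
    intro k
    induction k using Nat.strong_induction_on with
    | _ k ih =>
      intro d1 d2 L hlen hsum hlt
      by_cases hcase : d2 = d1 + 1
      · subst hcase
        simp only [Nat.add_sub_cancel]
        exact le_of_eq (hperm _ _ (List.Perm.swap (d1+1) d1 L))
      · have h12 : d1 + 2 ≤ d2 := by omega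
        by_cases h0 : 0 ∈ L
        · -- string case
          have hp : L.Perm (0 :: L.erase 0) := List.perm_cons_erase h0
          set L' := L.erase 0 with hL'
          have hkpos : 1 ≤ k := by
            have := List.length_pos_iff.mpr (List.ne_nil_of_mem h0); omega
          have hlen' : L'.length = k - 1 := by
            rw [hL', List.length_erase_of_mem h0, hlen]
          have hsum' : L'.sum = L.sum := by
            have := hp.sum_eq; simp at this; omega
          have mk : ∀ a b : ℕ, (a::b::L).Perm (0::a::b::L') := by
            intro a b
            exact ((hp.cons b).cons a).trans
              (((List.Perm.swap 0 b L').cons a).trans (List.Perm.swap 0 a (b::L')))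
          rw [hperm _ _ (mk d1 d2), hperm _ _ (mk (d1+1) (d2-1)),
            hstring (d1::d2::L') (by simp), hstring ((d1+1)::(d2-1)::L') (by simp),
            split2 I d1 d2 L', split2 I (d1+1) (d2-1) L',
            if_pos (by omega : 1 ≤ d2), if_pos (by omega : 1 ≤ d1 + 1),
            if_pos (by omega : 1 ≤ d2 - 1)]
          simp only [Nat.add_sub_cancel]
          have he : d2 - 1 - 1 = d2 - 2 := by omega
          rw [he]
          have hAC : (if 1 ≤ d1 then I ((d1-1)::d2::L') else 0) ≤ I ((d1+1)::(d2-2)::L') := by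
            by_cases hd1 : 1 ≤ d1
            · rw [if_pos hd1]
              have s1 : I ((d1-1)::d2::L') ≤ I ((d1-1+1)::(d2-1)::L') :=
                ih (k-1) (by omega) (d1-1) d2 L' (by omega) (by omega) (by omega)
              have s2 : I (d1::(d2-1)::L') ≤ I ((d1+1)::(d2-1-1)::L') :=
                ih (k-1) (by omega) d1 (d2-1) L' (by omega) (by omega) (by omega)
              rw [Nat.sub_add_cancel hd1] at s1
              rw [he] at s2
              exact s1.trans s2
            · rw [if_neg hd1]
              exact nonneg (L'.length + 2) _ (by simp) (by simp; omega) (by omega)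
          have hSS : (∑ j : Fin L'.length, if 1 ≤ L'.get j then I (d1 :: d2 :: L'.set ↑j (L'.get j - 1)) else 0)
              ≤ ∑ j : Fin L'.length, if 1 ≤ L'.get j then I ((d1+1) :: (d2-1) :: L'.set ↑j (L'.get j - 1)) else 0 := by
            apply Finset.sum_le_sum
            intro j _
            by_cases hj : 1 ≤ L'.get j
            · rw [if_pos hj, if_pos hj]
              have hss := sum_set_aux L' j hj
              exact ih (k-1) (by omega) d1 d2 _ (by rw [List.length_set]; omega) (by rw [List.length_set]; omega) hlt
            · rw [if_neg hj, if_neg hj]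
          linarith
        · by_cases h1 : 1 ∈ L
          · -- dilaton case
            have hp : L.Perm (1 :: L.erase 1) := List.perm_cons_erase h1
            set L' := L.erase 1 with hL'
            have hkpos : 1 ≤ k := by
              have := List.length_pos_iff.mpr (List.ne_nil_of_mem h1); omega
            have hlen' : L'.length = k - 1 := by
              rw [hL', List.length_erase_of_mem h1, hlen]
            have hsum' : L'.sum + 1 = L.sum := by
              have := hp.sum_eq; simp at this; omega
            have mk : ∀ a b : ℕ, (a::b::L).Perm (1::a::b::L') := by
              intro a b
              exact ((hp.cons b).cons a).trans
                (((List.Perm.swap 1 b L').cons a).trans (List.Perm.swap 1 a (b::L')))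
            rw [hperm _ _ (mk d1 d2), hperm _ _ (mk (d1+1) (d2-1)),
              hdilaton _ (by simp), hdilaton _ (by simp)]
            apply mul_le_mul_of_nonneg_left _ (by positivity)
            exact ih (k-1) (by omega) d1 d2 L' (by omega) (by omega) hlt
          · have h2 : ∀ x ∈ L, 2 ≤ x := by
              intro x hx
              match x with
              | 0 => exact absurd hx h0
              | 1 => exact absurd hx h1
              | (m+2) => omega
            have hll := two_mul_len_le_sum L h2
            have hk0 : L.length = 0 := by omega
            have hLnil : L = [] := List.length_eq_zero_iff.mp hk0
            subst hLnil
            simp at hsum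
            have hd1 : d1 = 0 := by omega
            have hd2 : d2 = 2 := by omega
            subst hd1; subst hd2
            norm_num
            rw [hbase1, hbase2]
  intro d1 d2 L hsum hlt
  exact main L.length d1 d2 L rfl hsum hlt
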